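/- arXiv:1503.02306 — 2 statements merged into one kernel-verified Lean document; each statement's English description precedes it below -/
import Mathlib

section
/- Take ε = 0 in the KAM linear program for DMU l, with all weights w_j^-, w_k^+ strictly positive. Then the optimal value of the program is 0 if and only if DMU l is technically (Pareto) efficient with respect to the convex hull of the DMUs, i.e., if and only if there is no λ ∈ ℝ_+^n with Σ_i λ_i = 1 such that Σ_i λ_i x_{ij} ≤ x_{lj} for all j and Σ_i λ_i y_{ik} ≥ y_{lk} for all k, with strict inequality in at least one of these m + p coordinates. -/
lemma kam_zero_mem (n m p : ℕ) (x : Fin n → Fin m → ℝ) (y : Fin n → Fin p → ℝ) (l : Fin n)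
    (hx : ∀ i j, 0 ≤ x i j) (hy : ∀ i k, 0 ≤ y i k)
    (wm : Fin m → ℝ) (wp : Fin p → ℝ) :
    (0 : ℝ) ∈ {v : ℝ | ∃ (lam : Fin n → ℝ) (sm : Fin m → ℝ) (sp : Fin p → ℝ),
        (∀ i, 0 ≤ lam i) ∧ (∑ i, lam i) = 1 ∧
        (∀ j, 0 ≤ sm j) ∧ (∀ k, 0 ≤ sp k) ∧
        (∀ j, (∑ i, lam i * x i j) + sm j = x l j + 0) ∧
        (∀ k, (∑ i, lam i * y i k) - sp k = y l k - 0) ∧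
        (∀ j, 0 ≤ x l j - sm j) ∧
        (∀ k, 0 ≤ y l k + sp k - 2 * 0) ∧
        v = (∑ j, wm j * sm j) + (∑ k, wp k * sp k)} := by
  refine ⟨fun i => if i = l then 1 else 0, 0, 0, ?_, ?_, ?_, ?_, ?_, ?_, ?_, ?_, ?_⟩
  · intro i; positivity
  · simp
  · intro j; simp
  · intro k; simp
  · intro j
    simp only [Pi.zero_apply, add_zero]
    rw [Finset.sum_congr rfl (fun i _ => by rw [ite_mul, one_mul, zero_mul])]
    simp
  · intro k
    simp only [Pi.zero_apply, sub_zero]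
    rw [Finset.sum_congr rfl (fun i _ => by rw [ite_mul, one_mul, zero_mul])]
    simp
  · intro j; simpa using hx l j
  · intro k; simpa using hy l k
  · simp

/-- With `ε = 0` and strictly positive weights, the optimal value of the
KAM linear program for DMU `l` is `0` if and only if DMU `l` is technically (Pareto)
efficient with respect to the convex hull of the DMUs: there is no convex combination
`λ` with `Σ_i λ_i x_{ij} ≤ x_{lj}` for all `j` and `Σ_i λ_i y_{ik} ≥ y_{lk}` for all
`k`, with strict inequality in at least one coordinate. -/
theorem kam_zero_value_iff_pareto_efficient
    (n m p : ℕ) (x : Fin n → Fin m → ℝ) (y : Fin n → Fin p → ℝ) (l : Fin n)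
    (hx : ∀ i j, 0 ≤ x i j) (hy : ∀ i k, 0 ≤ y i k)
    (wm : Fin m → ℝ) (wp : Fin p → ℝ)
    (hwm : ∀ j, 0 < wm j) (hwp : ∀ k, 0 < wp k) :
    IsGreatest
      {v : ℝ | ∃ (lam : Fin n → ℝ) (sm : Fin m → ℝ) (sp : Fin p → ℝ),
        (∀ i, 0 ≤ lam i) ∧ (∑ i, lam i) = 1 ∧
        (∀ j, 0 ≤ sm j) ∧ (∀ k, 0 ≤ sp k) ∧
        (∀ j, (∑ i, lam i * x i j) + sm j = x l j + 0) ∧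
        (∀ k, (∑ i, lam i * y i k) - sp k = y l k - 0) ∧
        (∀ j, 0 ≤ x l j - sm j) ∧
        (∀ k, 0 ≤ y l k + sp k - 2 * 0) ∧
        v = (∑ j, wm j * sm j) + (∑ k, wp k * sp k)} 0
    ↔
    ¬ ∃ lam : Fin n → ℝ,
        (∀ i, 0 ≤ lam i) ∧ (∑ i, lam i) = 1 ∧
        (∀ j, (∑ i, lam i * x i j) ≤ x l j) ∧
        (∀ k, y l k ≤ (∑ i, lam i * y i k)) ∧
        ((∃ j, (∑ i, lam i * x i j) < x l j) ∨
         (∃ k, y l k < (∑ i, lam i * y i k))) := by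
  constructor
  · rintro ⟨-, hub⟩ ⟨lam, h0, h1, hxle, hyle, hstrict⟩
    set sm : Fin m → ℝ := fun j => x l j - ∑ i, lam i * x i j with hsm
    set sp : Fin p → ℝ := fun k => (∑ i, lam i * y i k) - y l k with hsp
    have hsm0 : ∀ j, 0 ≤ sm j := fun j => by simp [hsm]; linarith [hxle j]
    have hsp0 : ∀ k, 0 ≤ sp k := fun k => by simp [hsp]; linarith [hyle k]
    set v : ℝ := (∑ j, wm j * sm j) + (∑ k, wp k * sp k) with hv
    have hvle : v ≤ 0 := by
      apply hub
      refine ⟨lam, sm, sp, h0, h1, hsm0, hsp0, ?_, ?_, ?_, ?_, rfl⟩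
      · intro j; simp [hsm]
      · intro k; simp [hsp]
      · intro j
        have h2 : 0 ≤ ∑ i, lam i * x i j :=
          Finset.sum_nonneg fun i _ => mul_nonneg (h0 i) (hx i j)
        simp [hsm]; linarith
      · intro k
        have := hsp0 k
        have := hy l k
        simp only [mul_zero, sub_zero]
        linarith
    have hpos : 0 < v := by
      have hA : 0 ≤ ∑ j, wm j * sm j :=
        Finset.sum_nonneg fun j _ => mul_nonneg (hwm j).le (hsm0 j)
      have hB : 0 ≤ ∑ k, wp k * sp k :=
        Finset.sum_nonneg fun k _ => mul_nonneg (hwp k).le (hsp0 k)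
      rcases hstrict with ⟨j, hj⟩ | ⟨k, hk⟩
      · have : 0 < ∑ j, wm j * sm j := by
          apply Finset.sum_pos' (fun j _ => mul_nonneg (hwm j).le (hsm0 j))
          exact ⟨j, Finset.mem_univ j, mul_pos (hwm j) (by simp [hsm]; linarith)⟩
        linarith
      · have : 0 < ∑ k, wp k * sp k := by
          apply Finset.sum_pos' (fun k _ => mul_nonneg (hwp k).le (hsp0 k))
          exact ⟨k, Finset.mem_univ k, mul_pos (hwp k) (by simp [hsp]; linarith)⟩
        linarith
    linarith
  · intro hne
    constructor
    · exact kam_zero_mem n m p x y l hx hy wm wp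
    · rintro v ⟨lam, sm, sp, h0, h1, hsm0, hsp0, heqx, heqy, -, -, hv⟩
      by_contra hvpos
      push_neg at hvpos
      have hxle : ∀ j, (∑ i, lam i * x i j) ≤ x l j := by
        intro j; have := heqx j; have := hsm0 j; linarith
      have hyle : ∀ k, y l k ≤ ∑ i, lam i * y i k := by
        intro k; have := heqy k; have := hsp0 k; linarith
      have hslack : (∃ j, 0 < sm j) ∨ (∃ k, 0 < sp k) := by
        by_contra h
        push_neg at h
        obtain ⟨hA, hB⟩ := h
        have hA' : ∀ j, sm j = 0 := fun j => le_antisymm (hA j) (hsm0 j)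
        have hB' : ∀ k, sp k = 0 := fun k => le_antisymm (hB k) (hsp0 k)
        have : v = 0 := by simp [hv, hA', hB']
        linarith
      apply hne
      refine ⟨lam, h0, h1, hxle, hyle, ?_⟩
      rcases hslack with ⟨j, hj⟩ | ⟨k, hk⟩
      · exact Or.inl ⟨j, by have := heqx j; linarith⟩
      · exact Or.inr ⟨k, by have := heqy k; linarith⟩
end

section
/- Consider the optimization problem: maximize s₁ + s₂ over λ ∈ [0,1] and s₁, s₂ ≥ 0 subject to 4λ + 10(1−λ) − s₁ = 3.9 and 10λ + 9(1−λ) − s₂ = 9.9. Its optimal value is 0.7, attained at the unique point λ = 9/10, s₁ = 0.7, s₂ = 0; in particular the optimal intensity weight on B is 1/10 > 0, so even with the smaller perturbation ε₁⁺ = ε₂⁺ = 0.1 the neighbor of A is still benchmarked toward B rather than to A. -/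
/-- Maximizing `s₁ + s₂` over `λ ∈ [0,1]`, `s₁, s₂ ≥ 0` subject to
`4λ + 10(1−λ) − s₁ = 3.9` and `10λ + 9(1−λ) − s₂ = 9.9` has optimal value `0.7`,
attained at the unique point `λ = 9/10`, `s₁ = 0.7`, `s₂ = 0`; in particular the
optimal intensity weight on `B`, namely `1 − λ = 1/10`, is positive, so even with
`ε₁⁺ = ε₂⁺ = 0.1` the neighbor of `A` is benchmarked toward `B` rather than to `A`. -/
theorem kam_example_A_vs_B_eps_tenth
    (Feasible : ℝ → ℝ → ℝ → Prop)
    (hFeasible : ∀ lam s₁ s₂, Feasible lam s₁ s₂ ↔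
      (0 ≤ lam ∧ lam ≤ 1 ∧ 0 ≤ s₁ ∧ 0 ≤ s₂ ∧
       4 * lam + 10 * (1 - lam) - s₁ = 3.9 ∧
       10 * lam + 9 * (1 - lam) - s₂ = 9.9)) :
    IsGreatest {v : ℝ | ∃ lam s₁ s₂, Feasible lam s₁ s₂ ∧ v = s₁ + s₂} 0.7 ∧
    (∀ lam s₁ s₂, Feasible lam s₁ s₂ → s₁ + s₂ = 0.7 →
      lam = 9/10 ∧ s₁ = 0.7 ∧ s₂ = 0) ∧
    ((1 : ℝ) - 9/10 = 1/10 ∧ (0 : ℝ) < 1 - 9/10) := by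
  refine ⟨⟨⟨9/10, 0.7, 0, ?_, by norm_num⟩, ?_⟩, ?_, by norm_num, by norm_num⟩
  · rw [hFeasible]; norm_num
  · rintro v ⟨lam, s₁, s₂, hf, rfl⟩
    rw [hFeasible] at hf
    obtain ⟨h0, h1, hs1, hs2, e1, e2⟩ := hf
    nlinarith
  · intro lam s₁ s₂ hf hsum
    rw [hFeasible] at hf
    obtain ⟨h0, h1, hs1, hs2, e1, e2⟩ := hf
    refine ⟨by nlinarith, by nlinarith, by nlinarith⟩
end
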